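/- arXiv:2003.06026 — 2 statements merged into one kernel-verified Lean document; each statement's English description precedes it below -/
import Mathlib

section
/- Let (p_n) be a sequence in (0,1) with ∑_n p_n < ∞ and (x_n) a real sequence. Let (Θ_n) be independent random variables with P(Θ_n = 1) = p_n and P(Θ_n = 0) = 1 − p_n, and define the martingale X_t = ∑_{n ≤ ⌊t⌋} x_n (1 − Θ_n/p_n) in its natural filtration. Then almost surely, lim_{t→∞} X_t exists in ℝ if and only if the series ∑_n x_n converges in ℝ. -/
open MeasureTheory Filter ProbabilityTheory

private lemma tendsto_shift_iff {g h : ℕ → ℝ} {c : ℝ}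
    (hgh : ∀ᶠ M in atTop, g M = h M + c) :
    (∃ l, Tendsto g atTop (nhds l)) ↔ (∃ l, Tendsto h atTop (nhds l)) := by
  constructor
  · rintro ⟨l, hl⟩
    exact ⟨l - c, (hl.sub_const c).congr' (hgh.mono fun M hM => by rw [hM]; ring)⟩
  · rintro ⟨l, hl⟩
    exact ⟨l + c, (hl.add_const c).congr' (hgh.mono fun M hM => hM.symm)⟩

/-- For the random walk `X_t = ∑_{n ≤ ⌊t⌋} x_n (1 - Θ_n/p_n)` with independent `Θ_n`,
`P(Θ_n = 1) = p_n ∈ (0,1)`, `∑ p_n < ∞`: almost surely, `lim_{t→∞} X_t` exists in `ℝ`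
iff the series `∑ x_n` converges in `ℝ`. -/
theorem randomWalk_convergence {Ω : Type*} {m : MeasurableSpace Ω} (μ : Measure Ω)
    [IsProbabilityMeasure μ] (p x : ℕ → ℝ) (Θ : ℕ → Ω → ℝ)
    (hp : ∀ n, p n ∈ Set.Ioo (0 : ℝ) 1) (hpsum : Summable p)
    (hmeas : ∀ n, Measurable (Θ n))
    (hindep : iIndepFun Θ μ)
    (hdist : ∀ n, μ.map (Θ n) =
      ENNReal.ofReal (p n) • Measure.dirac (1 : ℝ) +
        ENNReal.ofReal (1 - p n) • Measure.dirac (0 : ℝ)) :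
    ∀ᵐ ω ∂μ,
      ((∃ l : ℝ, Tendsto (fun t : ℝ =>
          ∑ n ∈ Finset.Icc 1 ⌊t⌋₊, x n * (1 - Θ n ω / p n)) atTop (nhds l)) ↔
        (∃ l : ℝ, Tendsto (fun M : ℕ =>
          ∑ n ∈ Finset.Icc 1 M, x n) atTop (nhds l))) := by
  -- the events `Θ n = 1`
  set s : ℕ → Set Ω := fun n => Θ n ⁻¹' {1} with hs
  have hμs : ∀ n, μ (s n) = ENNReal.ofReal (p n) := by
    intro n
    have h1 : μ (s n) = μ.map (Θ n) {1} := by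
      rw [Measure.map_apply (hmeas n) (measurableSet_singleton 1)]
    rw [h1, hdist n]
    simp
  have hsum : (∑' n, μ (s n)) ≠ ⊤ := by
    simp_rw [hμs]
    rw [← ENNReal.ofReal_tsum_of_nonneg (fun n => (hp n).1.le) hpsum]
    exact ENNReal.ofReal_ne_top
  -- Borel–Cantelli
  have hBC : ∀ᵐ ω ∂μ, ∀ᶠ n in atTop, ω ∉ s n := ae_eventually_notMem hsum
  -- a.e. values in {0,1}
  have h01 : ∀ᵐ ω ∂μ, ∀ n, Θ n ω = 0 ∨ Θ n ω = 1 := by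
    rw [ae_all_iff]
    intro n
    have hmeasset : MeasurableSet (({0, 1} : Set ℝ)ᶜ) :=
      (Set.Finite.measurableSet (by simp)).compl
    have : μ (Θ n ⁻¹' ({0, 1} : Set ℝ)ᶜ) = 0 := by
      rw [← Measure.map_apply (hmeas n) hmeasset, hdist n]
      simp [Measure.dirac_apply' _ hmeasset]
    refine measure_mono_null (fun ω hω => ?_) this
    simp only [Set.mem_preimage, Set.mem_compl_iff, Set.mem_insert_iff,
      Set.mem_singleton_iff]
    tauto
  filter_upwards [hBC, h01] with ω hω h01ω
  set f : ℕ → ℝ := fun n => x n * (1 - Θ n ω / p n) with hf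
  obtain ⟨N, hN⟩ := eventually_atTop.1 hω
  have hfx : ∀ n, N ≤ n → f n = x n := by
    intro n hn
    have : Θ n ω = 0 := by
      rcases h01ω n with h | h
      · exact h
      · exact absurd h (by simpa [s] using hN n hn)
    simp [hf, this]
  -- reduce real-variable limit to natural-variable limit
  have hfloor : (∃ l : ℝ, Tendsto (fun t : ℝ => ∑ n ∈ Finset.Icc 1 ⌊t⌋₊, f n)
      atTop (nhds l)) ↔
      ∃ l : ℝ, Tendsto (fun M : ℕ => ∑ n ∈ Finset.Icc 1 M, f n) atTop (nhds l) := by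
    constructor
    · rintro ⟨l, hl⟩
      refine ⟨l, (hl.comp tendsto_natCast_atTop_atTop).congr fun M => ?_⟩
      simp
    · rintro ⟨l, hl⟩
      exact ⟨l, hl.comp tendsto_nat_floor_atTop⟩
  rw [hfloor]
  -- the two partial-sum sequences differ eventually by a constant
  apply tendsto_shift_iff (c := ∑ n ∈ Finset.Icc 1 N, (f n - x n))
  filter_upwards [eventually_ge_atTop N] with M hM
  have hsub : ∑ n ∈ Finset.Icc 1 N, (f n - x n) = ∑ n ∈ Finset.Icc 1 M, (f n - x n) := by
    refine Finset.sum_subset (Finset.Icc_subset_Icc_right hM) fun n hn hn' => ?_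
    have : N ≤ n := by
      simp only [Finset.mem_Icc, not_and, not_le] at hn hn'
      omega
    rw [hfx n this, sub_self]
  rw [hsub, Finset.sum_sub_distrib]
  ring
end

section
/- With x_n = (−1)^n/√n in the random walk X_t = ∑_{n ≤ ⌊t⌋} x_n(1 − Θ_n/p_n) (independent Θ_n, P(Θ_n=1)=p_n ∈ (0,1), ∑ p_n < ∞): almost surely lim_{t→∞} X_t exists in ℝ while [X,X]_{∞−} = ∞. Hence there exists a locally bounded martingale that converges almost surely but has almost surely infinite quadratic variation. -/
open MeasureTheory Filter ProbabilityTheory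

lemma aux_det (a : ℕ → ℝ) (x : ℕ → ℝ) (hx : ∀ n, x n = (-1 : ℝ) ^ n / Real.sqrt n)
    (N : ℕ) (ha : ∀ n, N ≤ n → a n = x n) :
    (∃ l : ℝ, Tendsto (fun t : ℝ => ∑ n ∈ Finset.Icc 1 ⌊t⌋₊, a n) atTop (nhds l)) ∧
      Tendsto (fun M : ℕ => ∑ n ∈ Finset.Icc 1 M, (a n) ^ 2) atTop atTop := by
  have hhead : ∀ (f : ℕ → ℝ), (∀ n, N ≤ n → f n = 0) → ∀ M, N ≤ M →
      ∑ n ∈ Finset.Icc 1 M, f n = ∑ n ∈ Finset.Icc 1 N, f n := by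
    intro f hf M hM
    symm
    apply Finset.sum_subset
    · exact Finset.Icc_subset_Icc le_rfl hM
    · intro n hn hn'
      simp only [Finset.mem_Icc] at hn hn'
      exact hf n (by omega)
  constructor
  · -- convergence of partial sums
    set g : ℕ → ℝ := fun i => 1 / Real.sqrt (1 + i) with hgdef
    have hganti : Antitone g := by
      intro i j hij
      apply one_div_le_one_div_of_le
      · exact Real.sqrt_pos.2 (by positivity)
      · exact Real.sqrt_le_sqrt (by exact_mod_cast by linarith)
    have hga : Tendsto (fun i : ℕ => Real.sqrt (1 + i)) atTop atTop := by
      have h1 : Tendsto (fun i : ℕ => (1 : ℝ) + i) atTop atTop :=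
        tendsto_atTop_add_const_left _ _ tendsto_natCast_atTop_atTop
      refine ((tendsto_rpow_atTop (by norm_num : (0:ℝ) < 1/2)).comp h1).congr fun i => ?_
      exact (Real.sqrt_eq_rpow _).symm
    have hg0 : Tendsto g atTop (nhds 0) := by
      simpa [hgdef, one_div, Pi.inv_def] using hga.inv_tendsto_atTop
    obtain ⟨l, hl⟩ := hganti.tendsto_alternating_series_of_tendsto_zero hg0
    -- partial sums of x
    have hS : Tendsto (fun M : ℕ => ∑ n ∈ Finset.Icc 1 M, x n) atTop (nhds (-l)) := by
      have heq : ∀ M : ℕ, ∑ n ∈ Finset.Icc 1 M, x n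
          = -(∑ i ∈ Finset.range M, (-1 : ℝ) ^ i * g i) := by
        intro M
        rw [← Finset.Ico_add_one_right_eq_Icc, Finset.sum_Ico_eq_sum_range]
        simp only [Nat.add_sub_cancel, ← Finset.sum_neg_distrib]
        apply Finset.sum_congr rfl
        intro i _
        rw [hx]
        push_cast
        rw [pow_add]
        simp [hgdef, div_eq_mul_inv, one_div]
      simp only [heq]
      exact hl.neg
    set C : ℝ := ∑ n ∈ Finset.Icc 1 N, (a n - x n) with hC
    have hT : Tendsto (fun M : ℕ => ∑ n ∈ Finset.Icc 1 M, a n) atTop (nhds (-l + C)) := by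
      apply Tendsto.congr' ?_ (hS.add_const C)
      filter_upwards [eventually_ge_atTop N] with M hM
      have := hhead (fun n => a n - x n) (fun n hn => by rw [ha n hn]; ring) M hM
      have h2 : ∑ n ∈ Finset.Icc 1 M, a n
          = ∑ n ∈ Finset.Icc 1 M, x n + ∑ n ∈ Finset.Icc 1 M, (a n - x n) := by
        rw [← Finset.sum_add_distrib]; apply Finset.sum_congr rfl; intros; ring
      rw [h2, this, hC]
    exact ⟨-l + C, hT.comp tendsto_nat_floor_atTop⟩
  · -- divergence of sum of squares
    have hx2 : ∀ n : ℕ, (x n) ^ 2 = 1 / (n : ℝ) := by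
      intro n
      rw [hx, div_pow, ← pow_mul, mul_comm n 2, pow_mul, neg_one_sq, one_pow,
        Real.sq_sqrt (Nat.cast_nonneg n)]
    have hH : Tendsto (fun M : ℕ => ∑ n ∈ Finset.Icc 1 M, (1 / (n : ℝ))) atTop atTop := by
      have heq : ∀ M : ℕ, ∑ n ∈ Finset.Icc 1 M, (1 / (n : ℝ))
          = ∑ i ∈ Finset.range M, (1 / ((i : ℝ) + 1)) := by
        intro M
        rw [← Finset.Ico_add_one_right_eq_Icc, Finset.sum_Ico_eq_sum_range]
        apply Finset.sum_congr (by simp)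
        intro i _
        push_cast
        ring_nf
      simp only [heq]
      exact Real.tendsto_sum_range_one_div_nat_succ_atTop
    set C' : ℝ := ∑ n ∈ Finset.Icc 1 N, ((a n) ^ 2 - 1 / (n : ℝ)) with hC'
    apply Tendsto.congr' ?_ (tendsto_atTop_add_const_right atTop C' hH)
    filter_upwards [eventually_ge_atTop N] with M hM
    have := hhead (fun n => (a n) ^ 2 - 1 / (n : ℝ))
      (fun n hn => by rw [ha n hn, hx2 n]; ring) M hM
    have h2 : ∑ n ∈ Finset.Icc 1 M, (1 / (n : ℝ)) + C'
        = ∑ n ∈ Finset.Icc 1 M, (1 / (n : ℝ)) + ∑ n ∈ Finset.Icc 1 M, ((a n) ^ 2 - 1 / (n : ℝ)) := by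
      rw [hC', ← this]
    rw [h2, ← Finset.sum_add_distrib]
    apply Finset.sum_congr rfl; intros; ring

/-- With `x_n = (-1)^n/√n` in the random walk `X_t = ∑_{n ≤ ⌊t⌋} x_n (1 - Θ_n/p_n)`:
almost surely `lim_{t→∞} X_t` exists in `ℝ` while `[X,X]_{∞-} = ∞`, i.e. a locally
bounded martingale can converge a.s. while having a.s. infinite quadratic variation. -/
theorem randomWalk_convergent_infinite_qv {Ω : Type*} {m : MeasurableSpace Ω}
    (μ : Measure Ω) [IsProbabilityMeasure μ] (p : ℕ → ℝ) (Θ : ℕ → Ω → ℝ)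
    (hp : ∀ n, p n ∈ Set.Ioo (0 : ℝ) 1) (hpsum : Summable p)
    (hmeas : ∀ n, Measurable (Θ n))
    (hindep : iIndepFun Θ μ)
    (hdist : ∀ n, μ.map (Θ n) =
      ENNReal.ofReal (p n) • Measure.dirac (1 : ℝ) +
        ENNReal.ofReal (1 - p n) • Measure.dirac (0 : ℝ))
    (x : ℕ → ℝ) (hx : ∀ n, x n = (-1 : ℝ) ^ n / Real.sqrt n) :
    ∀ᵐ ω ∂μ,
      (∃ l : ℝ, Tendsto (fun t : ℝ =>
          ∑ n ∈ Finset.Icc 1 ⌊t⌋₊, x n * (1 - Θ n ω / p n)) atTop (nhds l)) ∧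
      Tendsto (fun M : ℕ =>
          ∑ n ∈ Finset.Icc 1 M, (x n * (1 - Θ n ω / p n)) ^ 2) atTop atTop := by
  have hμs : ∀ n, μ {ω | Θ n ω ≠ 0} = ENNReal.ofReal (p n) := by
    intro n
    have h1 : {ω | Θ n ω ≠ 0} = Θ n ⁻¹' ({0}ᶜ) := rfl
    rw [h1, ← Measure.map_apply (hmeas n) (measurableSet_singleton (0 : ℝ)).compl, hdist n]
    simp [Measure.dirac_apply]
  have hsum : (∑' n, μ {ω | Θ n ω ≠ 0}) ≠ ⊤ := by
    simp only [hμs]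
    rw [← ENNReal.ofReal_tsum_of_nonneg (fun n => (hp n).1.le) hpsum]
    exact ENNReal.ofReal_ne_top
  filter_upwards [ae_eventually_notMem hsum] with ω hω
  simp only [Set.mem_setOf_eq, not_not] at hω
  obtain ⟨N, hN⟩ := eventually_atTop.1 hω
  exact aux_det (fun n => x n * (1 - Θ n ω / p n)) x hx N
    (fun n hn => by simp only [hN n hn]; ring)
end
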